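/- Let p ∈ (3/2, 2), s_p and ζ as in the Sommerfeld setting, and let 0 ≤ a. Then the radial function ω⁻(r) = (1 + a r^{-ζ})^{-(p-1)/(2-p)} s_p(r) satisfies Δω⁻ ≥ 4π (ω⁻)^{1/(p-1)} pointwise for all r > 0. -/

import Mathlib

open Real

theorem omega_minus_subsolution (p a : ℝ) (hp : 3/2 < p ∧ p < 2) (ha : 0 ≤ a) :
    let b : ℝ := ((p-1)*(3*p-4)/(2*π*(2-p)^2)) ^ ((p-1)/(2-p))
    let σ : ℝ := 2*(p-1)/(2-p)
    let ζ : ℝ := (-5*p + 6 + Real.sqrt (p^2 + 20*p - 28)) / (2*(2-p))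
    let ω : ℝ → ℝ := fun r => (1 + a * r ^ (-ζ)) ^ (-(p-1)/(2-p)) * (b * r ^ (-σ))
    ∀ r : ℝ, 0 < r →
      deriv (deriv ω) r + (2/r) * deriv ω r ≥ 4*π * (ω r) ^ (1/(p-1)) := by
  intro b σ ζ ω
  obtain ⟨hp1, hp2⟩ := hp
  have hπ : (0:ℝ) < π := Real.pi_pos
  have hd : (0:ℝ) < 2 - p := by linarith
  have hc : (0:ℝ) < p - 1 := by linarith
  have h34 : (0:ℝ) < 3*p - 4 := by linarith
  have hKpos : (0:ℝ) < (p-1)*(3*p-4)/(2*π*(2-p)^2) := by positivity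
  have hb : 0 < b := Real.rpow_pos_of_pos hKpos _
  have hD : (0:ℝ) ≤ p^2 + 20*p - 28 := by nlinarith
  have hs : Real.sqrt (p^2+20*p-28) ^ 2 = p^2+20*p-28 := Real.sq_sqrt hD
  have hσval : σ = 2*(p-1)/(2-p) := rfl
  have hζval : ζ = (-5*p + 6 + Real.sqrt (p^2 + 20*p - 28)) / (2*(2-p)) := rfl
  have hbval : b = ((p-1)*(3*p-4)/(2*π*(2-p)^2)) ^ ((p-1)/(2-p)) := rfl
  have hωval : ω = fun r => (1 + a * r ^ (-ζ)) ^ (-(p-1)/(2-p)) * (b * r ^ (-σ)) := rfl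
  clear_value b σ ζ ω
  -- quadratic identity for ζ
  have hζid : (p-1)*ζ^2 + (p-1)*(2*σ-1)*ζ - (2-p)*σ*(σ-1) = 0 := by
    rw [hζval, hσval]
    field_simp
    have hs' : Real.sqrt (p*(p+20)-28) ^ 2 = p*(p+20)-28 := Real.sq_sqrt (by nlinarith)
    linear_combination (p-1) * hs'
  -- generic derivative lemma
  have key : ∀ (C m k t : ℝ), 0 < t → HasDerivAt (fun x : ℝ => C * (1 + a * x ^ (-ζ)) ^ m * x ^ k)
      (C * a * (-ζ) * m * (1 + a * t ^ (-ζ)) ^ (m - 1) * t ^ (k + (-ζ - 1))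
        + C * k * (1 + a * t ^ (-ζ)) ^ m * t ^ (k - 1)) t := by
    intro C m k t ht
    have hu : (0:ℝ) < 1 + a * t ^ (-ζ) := by positivity
    have h2 : HasDerivAt (fun x : ℝ => 1 + a * x ^ (-ζ)) (a * (-ζ * t ^ (-ζ - 1))) t :=
      ((Real.hasDerivAt_rpow_const (p := -ζ) (Or.inl ht.ne')).const_mul a).const_add 1
    have h5 := ((h2.rpow_const (p := m) (Or.inl hu.ne')).const_mul C).mul
      (Real.hasDerivAt_rpow_const (p := k) (Or.inl ht.ne'))
    refine h5.congr_deriv ?_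
    rw [Real.rpow_add ht]
    ring
  have hωeq : ω = fun t : ℝ => b * (1 + a * t ^ (-ζ)) ^ (-(p-1)/(2-p)) * t ^ (-σ) := by
    simp only [hωval]; funext t; ring
  have hω' : ∀ t : ℝ, 0 < t → HasDerivAt ω
      (b * a * (-ζ) * (-(p-1)/(2-p)) * (1 + a * t ^ (-ζ)) ^ (-(p-1)/(2-p) - 1) * t ^ (-σ + (-ζ - 1))
        + b * (-σ) * (1 + a * t ^ (-ζ)) ^ (-(p-1)/(2-p)) * t ^ (-σ - 1)) t := by
    intro t ht
    rw [hωeq]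
    exact key b (-(p-1)/(2-p)) (-σ) t ht
  intro r hr
  have hU : (0:ℝ) < 1 + a * r ^ (-ζ) := by positivity
  have hd1 : deriv ω r = b * a * (-ζ) * (-(p-1)/(2-p)) * (1 + a * r ^ (-ζ)) ^ (-(p-1)/(2-p) - 1) * r ^ (-σ + (-ζ - 1))
        + b * (-σ) * (1 + a * r ^ (-ζ)) ^ (-(p-1)/(2-p)) * r ^ (-σ - 1) := (hω' r hr).deriv
  have hev : deriv ω =ᶠ[nhds r] (fun t => b * a * (-ζ) * (-(p-1)/(2-p)) * (1 + a * t ^ (-ζ)) ^ (-(p-1)/(2-p) - 1) * t ^ (-σ + (-ζ - 1))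
        + b * (-σ) * (1 + a * t ^ (-ζ)) ^ (-(p-1)/(2-p)) * t ^ (-σ - 1)) := by
    filter_upwards [eventually_gt_nhds hr] with t ht
    exact (hω' t ht).deriv
  have hd2 : deriv (deriv ω) r =
      (b * a * (-ζ) * (-(p-1)/(2-p)) * a * (-ζ) * (-(p-1)/(2-p) - 1) * (1 + a * r ^ (-ζ)) ^ (-(p-1)/(2-p) - 1 - 1) * r ^ (-σ + (-ζ - 1) + (-ζ - 1))
        + b * a * (-ζ) * (-(p-1)/(2-p)) * (-σ + (-ζ - 1)) * (1 + a * r ^ (-ζ)) ^ (-(p-1)/(2-p) - 1) * r ^ (-σ + (-ζ - 1) - 1))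
      + (b * (-σ) * a * (-ζ) * (-(p-1)/(2-p)) * (1 + a * r ^ (-ζ)) ^ (-(p-1)/(2-p) - 1) * r ^ (-σ - 1 + (-ζ - 1))
        + b * (-σ) * (-σ - 1) * (1 + a * r ^ (-ζ)) ^ (-(p-1)/(2-p)) * r ^ (-σ - 1 - 1)) := by
    rw [hev.deriv_eq]
    exact ((key (b * a * (-ζ) * (-(p-1)/(2-p))) (-(p-1)/(2-p) - 1) (-σ + (-ζ - 1)) r hr).add
      (key (b * (-σ)) (-(p-1)/(2-p)) (-σ - 1) r hr)).deriv
  have hd' : (2-p) ≠ 0 := ne_of_gt hd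
  have hc' : (p-1) ≠ 0 := ne_of_gt hc
  -- power splitting lemmas
  have eU1 : (1 + a * r ^ (-ζ)) ^ (-(p-1)/(2-p) - 1) = (1 + a * r ^ (-ζ)) ^ (-(p-1)/(2-p) - 1 - 1) * (1 + a * r ^ (-ζ)) := by
    rw [← Real.rpow_add_one hU.ne']; congr 1; ring
  have eU2 : (1 + a * r ^ (-ζ)) ^ (-(p-1)/(2-p)) = (1 + a * r ^ (-ζ)) ^ (-(p-1)/(2-p) - 1 - 1) * (1 + a * r ^ (-ζ)) * (1 + a * r ^ (-ζ)) := by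
    rw [← Real.rpow_add_one hU.ne', ← Real.rpow_add_one hU.ne']; congr 1; ring
  have eA : r ^ (-σ + (-ζ - 1) + (-ζ - 1)) = r ^ (-σ - 2) * r ^ (-ζ) * r ^ (-ζ) := by
    rw [← Real.rpow_add hr, ← Real.rpow_add hr]; congr 1; ring
  have eB : r ^ (-σ + (-ζ - 1) - 1) = r ^ (-σ - 2) * r ^ (-ζ) := by
    rw [← Real.rpow_add hr]; congr 1; ring
  have eC : r ^ (-σ - 1 + (-ζ - 1)) = r ^ (-σ - 2) * r ^ (-ζ) := by
    rw [← Real.rpow_add hr]; congr 1; ring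
  have eD : r ^ (-σ - 1 - 1) = r ^ (-σ - 2) := by congr 1; ring
  have eE : r ^ (-σ + (-ζ - 1)) = r ^ (-σ - 2) * r ^ (-ζ) * r := by
    rw [← Real.rpow_add hr, ← Real.rpow_add_one hr.ne']; congr 1; ring
  have eF : r ^ (-σ - 1) = r ^ (-σ - 2) * r := by
    rw [← Real.rpow_add_one hr.ne']; congr 1; ring
  -- the Laplacian in canonical form
  have hLeq : deriv (deriv ω) r + (2/r) * deriv ω r =
      b * ((1 + a * r ^ (-ζ)) ^ (-(p-1)/(2-p) - 1 - 1) * r ^ (-σ - 2)) *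
        ((p-1)/(2-p)^2 * ζ^2 * a^2 * (r ^ (-ζ) * r ^ (-ζ))
          + (p-1)/(2-p) * ζ * (-2*σ - ζ + 1) * a * ((1 + a * r ^ (-ζ)) * r ^ (-ζ))
          + σ*(σ-1) * ((1 + a * r ^ (-ζ)) * (1 + a * r ^ (-ζ)))) := by
    rw [hd2, hd1, eA, eB, eC, eD, eE, eF, eU1, eU2]
    field_simp
    ring
  -- the right-hand side in canonical form
  have eU3 : (1 + a * r ^ (-ζ)) ^ (-(p-1)/(2-p) * (1/(p-1))) = (1 + a * r ^ (-ζ)) ^ (-(p-1)/(2-p) - 1 - 1) * (1 + a * r ^ (-ζ)) := by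
    rw [← Real.rpow_add_one hU.ne']; congr 1; field_simp; ring
  have eR3 : r ^ (-σ * (1/(p-1))) = r ^ (-σ - 2) := by
    congr 1; rw [hσval]; field_simp; ring
  have eb : b ^ (1/(p-1)) = b * ((p-1)*(3*p-4)/(2*π*(2-p)^2)) := by
    rw [hbval, ← Real.rpow_mul hKpos.le, ← Real.rpow_add_one hKpos.ne']
    congr 1; field_simp; ring
  have hωr : ω r = (1 + a * r ^ (-ζ)) ^ (-(p-1)/(2-p)) * (b * r ^ (-σ)) := by
    simp only [hωval]
  have hReq : 4*π * (ω r) ^ (1/(p-1)) =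
      b * ((1 + a * r ^ (-ζ)) ^ (-(p-1)/(2-p) - 1 - 1) * r ^ (-σ - 2)) *
        (σ*(σ-1) * (1 + a * r ^ (-ζ))) := by
    rw [hωr, Real.mul_rpow (Real.rpow_nonneg hU.le _) (mul_nonneg hb.le (Real.rpow_nonneg hr.le _)),
      Real.mul_rpow hb.le (Real.rpow_nonneg hr.le _),
      ← Real.rpow_mul hU.le, ← Real.rpow_mul hr.le, eU3, eR3, eb, hσval]
    field_simp
    ring
  -- the coefficient identity from the choice of ζ
  have hz : σ*(σ-1) - (p-1)/(2-p)*ζ^2 - (p-1)/(2-p)*(2*σ-1)*ζ = 0 := by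
    field_simp
    linear_combination -hζid
  have hXnn : (0:ℝ) ≤ r ^ (-ζ) := Real.rpow_nonneg hr.le _
  have hdiff : ((p-1)/(2-p)^2 * ζ^2 * a^2 * (r ^ (-ζ) * r ^ (-ζ))
          + (p-1)/(2-p) * ζ * (-2*σ - ζ + 1) * a * ((1 + a * r ^ (-ζ)) * r ^ (-ζ))
          + σ*(σ-1) * ((1 + a * r ^ (-ζ)) * (1 + a * r ^ (-ζ))))
        - σ*(σ-1) * (1 + a * r ^ (-ζ))
      = (p-1)/(2-p)^2 * ζ^2 * a^2 * (r ^ (-ζ) * r ^ (-ζ))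
        + (a * r ^ (-ζ) * (1 + a * r ^ (-ζ))) * (σ*(σ-1) - (p-1)/(2-p)*ζ^2 - (p-1)/(2-p)*(2*σ-1)*ζ) := by
    ring
  rw [hz, mul_zero, add_zero] at hdiff
  have hpos : 0 ≤ (p-1)/(2-p)^2 * ζ^2 * a^2 * (r ^ (-ζ) * r ^ (-ζ)) :=
    mul_nonneg (mul_nonneg (mul_nonneg (div_nonneg hc.le (sq_nonneg _)) (sq_nonneg ζ)) (sq_nonneg a)) (mul_nonneg hXnn hXnn)
  have h1 : σ*(σ-1) * (1 + a * r ^ (-ζ)) ≤ ((p-1)/(2-p)^2 * ζ^2 * a^2 * (r ^ (-ζ) * r ^ (-ζ))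
          + (p-1)/(2-p) * ζ * (-2*σ - ζ + 1) * a * ((1 + a * r ^ (-ζ)) * r ^ (-ζ))
          + σ*(σ-1) * ((1 + a * r ^ (-ζ)) * (1 + a * r ^ (-ζ)))) := by
    linarith [hdiff, hpos]
  have h2 : 0 ≤ b * ((1 + a * r ^ (-ζ)) ^ (-(p-1)/(2-p) - 1 - 1) * r ^ (-σ - 2)) :=
    mul_nonneg hb.le (mul_nonneg (Real.rpow_nonneg hU.le _) (Real.rpow_nonneg hr.le _))
  rw [ge_iff_le, hReq, hLeq]
  exact mul_le_mul_of_nonneg_left h1 h2
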